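/- Schwartz space acts boundedly on ℓ²: Under the same convolution hypothesis on φ (there is t₀ such that for t ≥ t₀, Σ_γ φ(gγ^{-1})φ(γ)/(1+|γ|)^t ≤ C_t φ(g) for all g, and symmetrically Σ_γ φ(γ)φ(γγ')/(1+|γ|)^t ≤ C_t φ(γ') for all γ'), for every h ∈ ℓ²(Γ) and every f with |f(γ)| ≤ φ(γ)/(1+|γ|)^t: Σ_g ( Σ_γ φ(γ)/(1+|γ|)^t · |h(γ^{-1}g)| )² ≤ C_t² ‖h‖₂², hence f * h ∈ ℓ²(Γ) with ‖f * h‖₂ ≤ C_t ‖h‖₂. -/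

import Mathlib

open scoped ENNReal NNReal

set_option maxHeartbeats 1000000


lemma amgm_real {a b u v : ℝ} (ha : 0 ≤ a) (hb : 0 ≤ b) (hu : 0 < u) (hv : 0 < v) :
    2 * a * b ≤ v * u⁻¹ * a ^ 2 + u * v⁻¹ * b ^ 2 := by
  have key : v * u⁻¹ * a ^ 2 + u * v⁻¹ * b ^ 2 - 2 * a * b = (v * a - u * b) ^ 2 / (u * v) := by
    field_simp
    ring
  nlinarith [div_nonneg (sq_nonneg (v * a - u * b)) (le_of_lt (mul_pos hu hv))]

lemma amgm_ennreal (a b u v : ℝ≥0∞) (hu0 : u ≠ 0) (hut : u ≠ ⊤) (hv0 : v ≠ 0) (hvt : v ≠ ⊤)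
    (ha : a ≠ ⊤) (hb : b ≠ ⊤) :
    2 * a * b ≤ v * u⁻¹ * a ^ 2 + u * v⁻¹ * b ^ 2 := by
  lift u to ℝ≥0 using hut
  lift v to ℝ≥0 using hvt
  lift a to ℝ≥0 using ha
  lift b to ℝ≥0 using hb
  have hu0' : u ≠ 0 := by exact_mod_cast hu0
  have hv0' : v ≠ 0 := by exact_mod_cast hv0
  rw [← ENNReal.coe_inv hu0', ← ENNReal.coe_inv hv0']
  norm_cast
  rw [← NNReal.coe_le_coe]
  push_cast
  exact amgm_real a.2 b.2 (NNReal.coe_pos.mpr (hu0'.bot_lt))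
    (NNReal.coe_pos.mpr (hv0'.bot_lt))

lemma ofReal_tsum_le {ι : Type*} (f : ι → ℝ) (hf : ∀ i, 0 ≤ f i) :
    ENNReal.ofReal (∑' i, f i) ≤ ∑' i, ENNReal.ofReal (f i) := by
  by_cases hs : Summable f
  · exact le_of_eq (ENNReal.ofReal_tsum_of_nonneg hf hs)
  · rw [tsum_eq_zero_of_not_summable hs]
    simp

lemma key_schur {G : Type*} [Group G] (Ψ Φ H : G → ℝ≥0∞) (C : ℝ≥0∞)
    (hΦ0 : ∀ g, Φ g ≠ 0) (hΦt : ∀ g, Φ g ≠ ⊤) (hHt : ∀ g, H g ≠ ⊤)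
    (hA : ∀ g : G, ∑' γ : G, Ψ γ * Φ (γ * g) ≤ C * Φ g)
    (hB : ∀ g : G, ∑' γ : G, Ψ γ * Φ (γ⁻¹ * g) ≤ C * Φ g) :
    ∑' g : G, (∑' γ : G, Ψ γ * H (γ⁻¹ * g)) ^ 2 ≤ C ^ 2 * ∑' x : G, H x ^ 2 := by
  set c : G → G → ℝ≥0∞ := fun γ g => Ψ γ * (Φ (γ⁻¹ * g))⁻¹ * H (γ⁻¹ * g) ^ 2 with hc
  set d : G → G → ℝ≥0∞ := fun γ g => Ψ γ * Φ (γ⁻¹ * g) with hd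
  have pointwise : ∀ g γ δ : G,
      2 * ((Ψ γ * H (γ⁻¹ * g)) * (Ψ δ * H (δ⁻¹ * g))) ≤ c γ g * d δ g + c δ g * d γ g := by
    intro g γ δ
    have h0 := amgm_ennreal (H (γ⁻¹ * g)) (H (δ⁻¹ * g)) (Φ (γ⁻¹ * g)) (Φ (δ⁻¹ * g))
      (hΦ0 _) (hΦt _) (hΦ0 _) (hΦt _) (hHt _) (hHt _)
    calc 2 * ((Ψ γ * H (γ⁻¹ * g)) * (Ψ δ * H (δ⁻¹ * g)))
        = Ψ γ * Ψ δ * (2 * H (γ⁻¹ * g) * H (δ⁻¹ * g)) := by ring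
      _ ≤ Ψ γ * Ψ δ * (Φ (δ⁻¹ * g) * (Φ (γ⁻¹ * g))⁻¹ * H (γ⁻¹ * g) ^ 2
            + Φ (γ⁻¹ * g) * (Φ (δ⁻¹ * g))⁻¹ * H (δ⁻¹ * g) ^ 2) := mul_le_mul_right h0 _
      _ = c γ g * d δ g + c δ g * d γ g := by simp only [hc, hd]; ring
  -- the single-sided bound on the triple sum
  have triple : ∑' g : G, ∑' γ : G, ∑' δ : G, c γ g * d δ g ≤ C ^ 2 * ∑' x : G, H x ^ 2 := by
    have step1 : ∀ g γ : G, ∑' δ : G, c γ g * d δ g ≤ c γ g * (C * Φ g) := by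
      intro g γ
      rw [ENNReal.tsum_mul_left]
      exact mul_le_mul_right (hB g) _
    calc ∑' g : G, ∑' γ : G, ∑' δ : G, c γ g * d δ g
        ≤ ∑' g : G, ∑' γ : G, c γ g * (C * Φ g) :=
          ENNReal.tsum_le_tsum fun g => ENNReal.tsum_le_tsum fun γ => step1 g γ
      _ = ∑' γ : G, ∑' g : G, c γ g * (C * Φ g) := ENNReal.tsum_comm
      _ = ∑' γ : G, ∑' x : G, (C * ((Φ x)⁻¹ * H x ^ 2)) * (Ψ γ * Φ (γ * x)) := by
          refine tsum_congr fun γ => ?_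
          rw [← (Equiv.mulLeft γ).tsum_eq fun g => c γ g * (C * Φ g)]
          refine tsum_congr fun x => ?_
          simp only [Equiv.coe_mulLeft, hc, inv_mul_cancel_left]
          ring
      _ = ∑' x : G, (C * ((Φ x)⁻¹ * H x ^ 2)) * ∑' γ : G, Ψ γ * Φ (γ * x) := by
          rw [ENNReal.tsum_comm]
          exact tsum_congr fun x => ENNReal.tsum_mul_left
      _ ≤ ∑' x : G, (C * ((Φ x)⁻¹ * H x ^ 2)) * (C * Φ x) :=
          ENNReal.tsum_le_tsum fun x => mul_le_mul_right (hA x) _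
      _ = ∑' x : G, C ^ 2 * (H x ^ 2 * ((Φ x)⁻¹ * Φ x)) := tsum_congr fun x => by ring
      _ = C ^ 2 * ∑' x : G, H x ^ 2 := by
          rw [ENNReal.tsum_mul_left]
          congr 1
          exact tsum_congr fun x => by rw [ENNReal.inv_mul_cancel (hΦ0 x) (hΦt x), mul_one]
  -- assemble
  rw [← ENNReal.mul_le_mul_iff_right (a := 2) (by norm_num) (by norm_num)]
  calc 2 * ∑' g : G, (∑' γ : G, Ψ γ * H (γ⁻¹ * g)) ^ 2
      = ∑' g : G, ∑' γ : G, ∑' δ : G, 2 * ((Ψ γ * H (γ⁻¹ * g)) * (Ψ δ * H (δ⁻¹ * g))) := by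
        rw [← ENNReal.tsum_mul_left]
        refine tsum_congr fun g => ?_
        rw [sq, ← ENNReal.tsum_mul_right, ← ENNReal.tsum_mul_left]
        refine tsum_congr fun γ => ?_
        rw [← ENNReal.tsum_mul_left, ← ENNReal.tsum_mul_left]
    _ ≤ ∑' g : G, ∑' γ : G, ∑' δ : G, (c γ g * d δ g + c δ g * d γ g) :=
        ENNReal.tsum_le_tsum fun g => ENNReal.tsum_le_tsum fun γ =>
          ENNReal.tsum_le_tsum fun δ => pointwise g γ δ
    _ = (∑' g : G, ∑' γ : G, ∑' δ : G, c γ g * d δ g)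
        + ∑' g : G, ∑' γ : G, ∑' δ : G, c δ g * d γ g := by
        rw [← ENNReal.tsum_add]
        refine tsum_congr fun g => ?_
        rw [← ENNReal.tsum_add]
        refine tsum_congr fun γ => ?_
        exact ENNReal.tsum_add
    _ = (∑' g : G, ∑' γ : G, ∑' δ : G, c γ g * d δ g)
        + ∑' g : G, ∑' γ : G, ∑' δ : G, c γ g * d δ g := by
        congr 1
        exact tsum_congr fun g => ENNReal.tsum_comm
    _ ≤ C ^ 2 * (∑' x : G, H x ^ 2) + C ^ 2 * (∑' x : G, H x ^ 2) := add_le_add triple triple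
    _ = 2 * (C ^ 2 * ∑' x : G, H x ^ 2) := (two_mul _).symm



/-- the Schwartz space acts boundedly on `ℓ²`: under the two
convolution estimates for `φ`,
`Σ_g (Σ_γ φ(γ)/(1+|γ|)^t |h(γ⁻¹g)|)² ≤ C_t² ‖h‖₂²`, hence `f * h ∈ ℓ²` with
`‖f * h‖₂ ≤ C_t ‖h‖₂` whenever `|f(γ)| ≤ φ(γ)/(1+|γ|)^t`. -/
theorem stmt18 {G : Type*} [Group G] [Countable G]
    (ℓ : G → ℝ) (hℓpos : ∀ γ, 0 ≤ ℓ γ) (hℓinv : ∀ γ, ℓ γ⁻¹ = ℓ γ)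
    (φ : G → ℝ) (hφpos : ∀ γ, 0 < φ γ) (hφinv : ∀ γ, φ γ⁻¹ = φ γ)
    (t Ct : ℝ) (hCt : 0 < Ct)
    -- convolution estimate for `φ`
    (hconv₁ : ∀ g : G,
      Summable (fun γ : G => φ (g * γ⁻¹) * φ γ / (1 + ℓ γ) ^ t) ∧
      ∑' γ : G, φ (g * γ⁻¹) * φ γ / (1 + ℓ γ) ^ t ≤ Ct * φ g)
    -- its symmetric variant
    (hconv₂ : ∀ γ' : G,
      Summable (fun γ : G => φ γ * φ (γ * γ') / (1 + ℓ γ) ^ t) ∧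
      ∑' γ : G, φ γ * φ (γ * γ') / (1 + ℓ γ) ^ t ≤ Ct * φ γ')
    -- `h ∈ ℓ²(Γ)`
    (h : G → ℝ) (hh : Summable (fun g => h g ^ 2)) :
    (Summable (fun g : G =>
        (∑' γ : G, φ γ / (1 + ℓ γ) ^ t * |h (γ⁻¹ * g)|) ^ 2) ∧
      ∑' g : G, (∑' γ : G, φ γ / (1 + ℓ γ) ^ t * |h (γ⁻¹ * g)|) ^ 2
        ≤ Ct ^ 2 * ∑' g : G, h g ^ 2) ∧
    ∀ f : G → ℝ, (∀ γ, |f γ| ≤ φ γ / (1 + ℓ γ) ^ t) →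
      Summable (fun g : G => (∑' γ : G, f γ * h (γ⁻¹ * g)) ^ 2) ∧
      ∑' g : G, (∑' γ : G, f γ * h (γ⁻¹ * g)) ^ 2 ≤ Ct ^ 2 * ∑' g : G, h g ^ 2 := by

  classical
  set ψ : G → ℝ := fun γ => φ γ / (1 + ℓ γ) ^ t with hψdef
  have hψpos : ∀ γ, 0 < ψ γ := fun γ =>
    div_pos (hφpos γ) (Real.rpow_pos_of_pos (by linarith [hℓpos γ]) t)
  set Ψ : G → ℝ≥0∞ := fun γ => ENNReal.ofReal (ψ γ) with hΨdef
  set Φ' : G → ℝ≥0∞ := fun g => ENNReal.ofReal (φ g) with hΦdef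
  set Hh : G → ℝ≥0∞ := fun x => ENNReal.ofReal |h x| with hHdef
  have hΦ0 : ∀ g, Φ' g ≠ 0 := fun g => (ENNReal.ofReal_pos.mpr (hφpos g)).ne'
  have hΦt : ∀ g, Φ' g ≠ ⊤ := fun g => ENNReal.ofReal_ne_top
  have hHt : ∀ g, Hh g ≠ ⊤ := fun g => ENNReal.ofReal_ne_top
  -- convolution estimates in ℝ≥0∞
  have hA : ∀ g : G, ∑' γ : G, Ψ γ * Φ' (γ * g) ≤ ENNReal.ofReal Ct * Φ' g := by
    intro g
    obtain ⟨hs, hle⟩ := hconv₂ g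
    have hfun : ∀ γ : G, φ γ * φ (γ * g) / (1 + ℓ γ) ^ t = ψ γ * φ (γ * g) := by
      intro γ; rw [hψdef]; ring
    have hs' : Summable (fun γ : G => ψ γ * φ (γ * g)) := by
      simpa [hfun] using hs
    calc ∑' γ : G, Ψ γ * Φ' (γ * g)
        = ∑' γ : G, ENNReal.ofReal (ψ γ * φ (γ * g)) :=
          tsum_congr fun γ => (ENNReal.ofReal_mul (hψpos γ).le).symm
      _ = ENNReal.ofReal (∑' γ : G, ψ γ * φ (γ * g)) :=
          (ENNReal.ofReal_tsum_of_nonneg (fun γ => mul_nonneg (hψpos γ).le (hφpos _).le) hs').symm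
      _ ≤ ENNReal.ofReal (Ct * φ g) := by
          refine ENNReal.ofReal_le_ofReal ?_
          calc ∑' γ : G, ψ γ * φ (γ * g)
              = ∑' γ : G, φ γ * φ (γ * g) / (1 + ℓ γ) ^ t := tsum_congr fun γ => (hfun γ).symm
            _ ≤ Ct * φ g := hle
      _ = ENNReal.ofReal Ct * Φ' g := ENNReal.ofReal_mul hCt.le
  have hΨinv : ∀ γ : G, Ψ γ⁻¹ = Ψ γ := by
    intro γ; simp only [hΨdef, hψdef, hφinv, hℓinv]
  have hB : ∀ g : G, ∑' γ : G, Ψ γ * Φ' (γ⁻¹ * g) ≤ ENNReal.ofReal Ct * Φ' g := by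
    intro g
    calc ∑' γ : G, Ψ γ * Φ' (γ⁻¹ * g)
        = ∑' γ : G, Ψ γ⁻¹ * Φ' (γ * g) := by
          rw [← (Equiv.inv G).tsum_eq (fun γ => Ψ γ⁻¹ * Φ' (γ * g))]
          exact tsum_congr fun γ => by simp
      _ = ∑' γ : G, Ψ γ * Φ' (γ * g) := tsum_congr fun γ => by rw [hΨinv]
      _ ≤ _ := hA g
  -- the key bound
  have hHsum : ∑' x : G, Hh x ^ 2 = ENNReal.ofReal (∑' x : G, h x ^ 2) := by
    rw [ENNReal.ofReal_tsum_of_nonneg (fun x => sq_nonneg _) hh]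
    refine tsum_congr fun x => ?_
    rw [hHdef]
    rw [← ENNReal.ofReal_pow (abs_nonneg _), sq_abs]
  have hkey : ∑' g : G, (∑' γ : G, Ψ γ * Hh (γ⁻¹ * g)) ^ 2
      ≤ ENNReal.ofReal Ct ^ 2 * ENNReal.ofReal (∑' x : G, h x ^ 2) := by
    rw [← hHsum]
    exact key_schur Ψ Φ' Hh _ hΦ0 hΦt hHt hA hB
  set B : ℝ≥0∞ := ENNReal.ofReal Ct ^ 2 * ENNReal.ofReal (∑' x : G, h x ^ 2) with hBdef
  have hBt : B ≠ ⊤ := ENNReal.mul_ne_top (by simp [ENNReal.pow_ne_top]) ENNReal.ofReal_ne_top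
  have hBr : B.toReal = Ct ^ 2 * ∑' g : G, h g ^ 2 := by
    rw [hBdef, ENNReal.toReal_mul, ENNReal.toReal_pow, ENNReal.toReal_ofReal hCt.le,
      ENNReal.toReal_ofReal (tsum_nonneg fun g => sq_nonneg _)]
  set E : G → ℝ≥0∞ := fun g => ∑' γ : G, Ψ γ * Hh (γ⁻¹ * g) with hEdef
  -- master lemma
  have master : ∀ u : G → ℝ, (∀ g, 0 ≤ u g) → (∀ g, ENNReal.ofReal (u g) ≤ E g) →
      Summable (fun g => u g ^ 2) ∧ ∑' g : G, u g ^ 2 ≤ Ct ^ 2 * ∑' g : G, h g ^ 2 := by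
    intro u hu0 huE
    have hb : ∑' g : G, ENNReal.ofReal (u g ^ 2) ≤ B := by
      calc ∑' g : G, ENNReal.ofReal (u g ^ 2)
          = ∑' g : G, (ENNReal.ofReal (u g)) ^ 2 :=
            tsum_congr fun g => ENNReal.ofReal_pow (hu0 g) 2
        _ ≤ ∑' g : G, E g ^ 2 :=
            ENNReal.tsum_le_tsum fun g => pow_le_pow_left₀ zero_le (huE g) 2
        _ ≤ B := hkey
    have hne : ∑' g : G, ENNReal.ofReal (u g ^ 2) ≠ ⊤ := (lt_of_le_of_lt hb hBt.lt_top).ne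
    have hsum : Summable (fun g => u g ^ 2) := by
      have := ENNReal.summable_toReal hne
      simpa [ENNReal.toReal_ofReal (sq_nonneg _)] using this
    refine ⟨hsum, ?_⟩
    have h2 : ENNReal.ofReal (∑' g : G, u g ^ 2) ≤ B := by
      rw [ENNReal.ofReal_tsum_of_nonneg (fun g => sq_nonneg _) hsum]
      exact hb
    calc ∑' g : G, u g ^ 2
        = (ENNReal.ofReal (∑' g : G, u g ^ 2)).toReal :=
          (ENNReal.toReal_ofReal (tsum_nonneg fun g => sq_nonneg _)).symm
      _ ≤ B.toReal := ENNReal.toReal_mono hBt h2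
      _ = Ct ^ 2 * ∑' g : G, h g ^ 2 := hBr
  constructor
  · -- part 1
    refine master (fun g => ∑' γ : G, ψ γ * |h (γ⁻¹ * g)|)
      (fun g => tsum_nonneg fun γ => mul_nonneg (hψpos γ).le (abs_nonneg _)) ?_
    intro g
    calc ENNReal.ofReal (∑' γ : G, ψ γ * |h (γ⁻¹ * g)|)
        ≤ ∑' γ : G, ENNReal.ofReal (ψ γ * |h (γ⁻¹ * g)|) :=
          ofReal_tsum_le _ fun γ => mul_nonneg (hψpos γ).le (abs_nonneg _)
      _ = E g := tsum_congr fun γ => ENNReal.ofReal_mul (hψpos γ).le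
  · -- part 2
    intro f hf
    have key2 : ∀ g : G, ENNReal.ofReal |∑' γ : G, f γ * h (γ⁻¹ * g)| ≤ E g := by
      intro g
      by_cases hsf : Summable (fun γ : G => f γ * h (γ⁻¹ * g))
      · have habs : Summable (fun γ : G => |f γ * h (γ⁻¹ * g)|) := hsf.abs
        have habs' : Summable (fun γ : G => ‖f γ * h (γ⁻¹ * g)‖) := by
          simpa only [Real.norm_eq_abs] using habs
        have h1 : |∑' γ : G, f γ * h (γ⁻¹ * g)| ≤ ∑' γ : G, |f γ * h (γ⁻¹ * g)| := by
          have := norm_tsum_le_tsum_norm habs'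
          simpa only [Real.norm_eq_abs] using this
        calc ENNReal.ofReal |∑' γ : G, f γ * h (γ⁻¹ * g)|
            ≤ ENNReal.ofReal (∑' γ : G, |f γ * h (γ⁻¹ * g)|) := ENNReal.ofReal_le_ofReal h1
          _ ≤ ∑' γ : G, ENNReal.ofReal |f γ * h (γ⁻¹ * g)| :=
              ofReal_tsum_le _ fun γ => abs_nonneg _
          _ ≤ E g := by
              refine ENNReal.tsum_le_tsum fun γ => ?_
              rw [abs_mul, ENNReal.ofReal_mul (abs_nonneg _)]
              exact mul_le_mul_left (ENNReal.ofReal_le_ofReal (hf γ)) _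
      · rw [tsum_eq_zero_of_not_summable hsf]
        simp
    have := master (fun g => |∑' γ : G, f γ * h (γ⁻¹ * g)|) (fun g => abs_nonneg _) key2
    constructor
    · have := this.1
      simpa [sq_abs] using this
    · have := this.2
      simpa [sq_abs] using this
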